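/- Let k be a field, n ≥ 2 an integer, ζ ∈ k a primitive n-th root of unity, r an integer with ζ^r ≠ 1 and ζ^{2r} ≠ 1, and x ∈ k with x ≠ 0. Then the k-algebra homomorphisms φ : 𝒥_x(r) → k are exactly those determined by triples (φ(e₀), φ(e₁), φ(e₂)) = (a, b, c) with either (a, b, c) = (ζ^{2r} − 1, 0, 0), or a = 0 and b·c = x. That is, every algebra homomorphism 𝒥_x(r) → k yields such a triple, and every such triple extends (uniquely) to an algebra homomorphism. -/
import Mathlib


/-- The defining relations of the Jackson algebra `𝒥_x(r)` over `k`: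
generators `e₀, e₁, e₂` and relations `e₀e₁ = ζ^r e₁e₀`, `e₂e₀ = ζ^r e₀e₂`,
`e₂e₁ = ζ^{2r} e₁e₂ + x e₀ + x (1 − ζ^{2r})`. -/
inductive JacksonRel (k : Type*) [Field k] (ζ : k) (r : ℤ) (x : k) :
    FreeAlgebra k (Fin 3) → FreeAlgebra k (Fin 3) → Prop
  | r01 : JacksonRel k ζ r x (FreeAlgebra.ι k 0 * FreeAlgebra.ι k 1)
      (ζ ^ r • (FreeAlgebra.ι k 1 * FreeAlgebra.ι k 0))
  | r20 : JacksonRel k ζ r x (FreeAlgebra.ι k 2 * FreeAlgebra.ι k 0)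
      (ζ ^ r • (FreeAlgebra.ι k 0 * FreeAlgebra.ι k 2))
  | r21 : JacksonRel k ζ r x (FreeAlgebra.ι k 2 * FreeAlgebra.ι k 1)
      (ζ ^ (2 * r) • (FreeAlgebra.ι k 1 * FreeAlgebra.ι k 2) + x • FreeAlgebra.ι k 0 +
        (x * (1 - ζ ^ (2 * r))) • (1 : FreeAlgebra k (Fin 3)))

/-- The Jackson algebra `𝒥_x(r)` over `k`. -/
abbrev Jackson (k : Type*) [Field k] (ζ : k) (r : ℤ) (x : k) :=
  RingQuot (JacksonRel k ζ r x)

/-- The generators `e₀, e₁, e₂` of the Jackson algebra. -/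
noncomputable def JacksonGen (k : Type*) [Field k] (ζ : k) (r : ℤ) (x : k) (i : Fin 3) :
    Jackson k ζ r x :=
  RingQuot.mkAlgHom k (JacksonRel k ζ r x) (FreeAlgebra.ι k i)

/-- Let `k` be a field, `n ≥ 2`, `ζ ∈ k` a primitive `n`-th root
of unity, `r` an integer with `ζ^r ≠ 1` and `ζ^{2r} ≠ 1`, and `x ≠ 0`.  The
`k`-algebra homomorphisms `φ : 𝒥_x(r) → k` are exactly those determined by triples
`(φ e₀, φ e₁, φ e₂) = (a, b, c)` with either `(a, b, c) = (ζ^{2r} − 1, 0, 0)`, or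
`a = 0` and `b·c = x`: every algebra homomorphism yields such a triple, and every
such triple extends (uniquely) to an algebra homomorphism. -/

private lemma jackson_hom_ext {k : Type*} [Field k] {ζ : k} {r : ℤ} {x : k}
    {φ ψ : Jackson k ζ r x →ₐ[k] k}
    (h : ∀ i, φ (JacksonGen k ζ r x i) = ψ (JacksonGen k ζ r x i)) : φ = ψ := by
  apply RingQuot.ringQuot_ext'
  apply FreeAlgebra.hom_ext
  funext i
  exact h i

private lemma jackson_rel_eqs {k : Type*} [Field k] {ζ : k} {r : ℤ} {x : k}
    (φ : Jackson k ζ r x →ₐ[k] k) :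
    (φ (JacksonGen k ζ r x 0) * φ (JacksonGen k ζ r x 1)
      = ζ ^ r * (φ (JacksonGen k ζ r x 1) * φ (JacksonGen k ζ r x 0))) ∧
    (φ (JacksonGen k ζ r x 2) * φ (JacksonGen k ζ r x 0)
      = ζ ^ r * (φ (JacksonGen k ζ r x 0) * φ (JacksonGen k ζ r x 2))) ∧
    (φ (JacksonGen k ζ r x 2) * φ (JacksonGen k ζ r x 1)
      = ζ ^ (2 * r) * (φ (JacksonGen k ζ r x 1) * φ (JacksonGen k ζ r x 2))
        + x * φ (JacksonGen k ζ r x 0) + x * (1 - ζ ^ (2 * r))) := by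
  refine ⟨?_, ?_, ?_⟩
  · have := congrArg φ (RingQuot.mkAlgHom_rel k (JacksonRel.r01 (k := k) (ζ := ζ) (r := r) (x := x)))
    simpa [JacksonGen, map_mul, map_smul, smul_eq_mul] using this
  · have := congrArg φ (RingQuot.mkAlgHom_rel k (JacksonRel.r20 (k := k) (ζ := ζ) (r := r) (x := x)))
    simpa [JacksonGen, map_mul, map_smul, smul_eq_mul] using this
  · have := congrArg φ (RingQuot.mkAlgHom_rel k (JacksonRel.r21 (k := k) (ζ := ζ) (r := r) (x := x)))
    simpa [JacksonGen, map_mul, map_add, map_smul, map_one, smul_eq_mul] using this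

theorem jackson_one_dimensional_points (k : Type*) [Field k] (n : ℕ) (hn : 2 ≤ n)
    (ζ : k) (hζ : IsPrimitiveRoot ζ n) (r : ℤ)
    (hr1 : ζ ^ r ≠ 1) (hr2 : ζ ^ (2 * r) ≠ 1) (x : k) (hx : x ≠ 0) :
    (∀ φ : Jackson k ζ r x →ₐ[k] k,
      (φ (JacksonGen k ζ r x 0) = ζ ^ (2 * r) - 1 ∧
        φ (JacksonGen k ζ r x 1) = 0 ∧ φ (JacksonGen k ζ r x 2) = 0) ∨
      (φ (JacksonGen k ζ r x 0) = 0 ∧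
        φ (JacksonGen k ζ r x 1) * φ (JacksonGen k ζ r x 2) = x)) ∧
    (∀ a b c : k,
      ((a = ζ ^ (2 * r) - 1 ∧ b = 0 ∧ c = 0) ∨ (a = 0 ∧ b * c = x)) →
      ∃! φ : Jackson k ζ r x →ₐ[k] k,
        φ (JacksonGen k ζ r x 0) = a ∧ φ (JacksonGen k ζ r x 1) = b ∧
          φ (JacksonGen k ζ r x 2) = c) := by
  constructor
  · intro φ
    obtain ⟨h01, h20, h21⟩ := jackson_rel_eqs φ
    set a := φ (JacksonGen k ζ r x 0) with ha
    set b := φ (JacksonGen k ζ r x 1) with hb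
    set c := φ (JacksonGen k ζ r x 2) with hc
    have hab : a * b = 0 := by
      by_contra hne
      have h' : (1 - ζ ^ r) * (a * b) = 0 := by
        rw [mul_comm b a] at h01; linear_combination h01
      rcases mul_eq_zero.mp h' with h'' | h''
      · exact hr1 (by linear_combination -h'')
      · exact hne h''
    have hca : c * a = 0 := by
      by_contra hne
      have h' : (1 - ζ ^ r) * (c * a) = 0 := by
        rw [mul_comm a c] at h20; linear_combination h20
      rcases mul_eq_zero.mp h' with h'' | h''
      · exact hr1 (by linear_combination -h'')
      · exact hne h''
    by_cases hb0 : b = 0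
    · by_cases hc0 : c = 0
      · left
        refine ⟨?_, hb0, hc0⟩
        have h' : x * a = x * (ζ ^ (2 * r) - 1) := by
          rw [hb0, hc0] at h21; linear_combination -h21
        exact mul_left_cancel₀ hx h'
      · exfalso
        have ha0 : a = 0 := by
          rcases mul_eq_zero.mp hca with h | h
          · exact absurd h hc0
          · exact h
        have h' : x * (1 - ζ ^ (2 * r)) = 0 := by
          rw [hb0, ha0] at h21; linear_combination -h21
        rcases mul_eq_zero.mp h' with h'' | h''
        · exact hx h''
        · exact hr2 (by linear_combination -h'')
    · right
      have ha0 : a = 0 := by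
        rcases mul_eq_zero.mp hab with h | h
        · exact h
        · exact absurd h hb0
      refine ⟨ha0, ?_⟩
      rw [ha0] at h21
      simp at h21
      have : (1 - ζ ^ (2 * r)) * (b * c) = (1 - ζ ^ (2 * r)) * x := by
        rw [mul_comm c b] at h21; linear_combination h21
      exact mul_left_cancel₀ (sub_ne_zero.mpr (Ne.symm hr2)) this
  · intro a b c h
    have hrel : ∀ ⦃u v : FreeAlgebra k (Fin 3)⦄, JacksonRel k ζ r x u v →
        (FreeAlgebra.lift k (![a, b, c] : Fin 3 → k)) u
          = (FreeAlgebra.lift k (![a, b, c] : Fin 3 → k)) v := by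
      intro u v huv
      induction huv with
      | r01 =>
        simp [map_mul, map_smul, smul_eq_mul]
        rcases h with ⟨_, hb, _⟩ | ⟨ha, _⟩
        · rw [hb]; ring
        · rw [ha]; ring
      | r20 =>
        simp [map_mul, map_smul, smul_eq_mul]
        rcases h with ⟨_, _, hc⟩ | ⟨ha, _⟩
        · rw [hc]; ring
        · rw [ha]; ring
      | r21 =>
        simp [map_mul, map_add, map_smul, map_one, smul_eq_mul]
        rcases h with ⟨ha, hb, hc⟩ | ⟨ha, hbc⟩
        · rw [ha, hb, hc]; ring
        · rw [ha, mul_comm c b, hbc]; ring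
    refine ⟨RingQuot.liftAlgHom k ⟨FreeAlgebra.lift k (![a, b, c] : Fin 3 → k), hrel⟩,
      ⟨?_, ?_, ?_⟩, ?_⟩
    · simp [JacksonGen, RingQuot.liftAlgHom_mkAlgHom_apply]
    · simp [JacksonGen, RingQuot.liftAlgHom_mkAlgHom_apply]
    · simp [JacksonGen, RingQuot.liftAlgHom_mkAlgHom_apply]
    · intro ψ ⟨h0, h1, h2⟩
      apply jackson_hom_ext
      intro i
      fin_cases i
      · simp [JacksonGen, RingQuot.liftAlgHom_mkAlgHom_apply]; exact h0
      · simp [JacksonGen, RingQuot.liftAlgHom_mkAlgHom_apply]; exact h1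
      · simp [JacksonGen, RingQuot.liftAlgHom_mkAlgHom_apply]; exact h2
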